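/- Let 1 < q < ∞, v ∈ ℝⁿ with vᵢ > 0 for all i, and 0 < λ < ‖v‖_{q̄}. With ε = (‖v‖_{q̄} − λ)/‖v‖_{q̄}, cᵢ = (vᵢ − vᵢε)/(vᵢε)^{q−1}, c̲ = minᵢ cᵢ and c̄ = maxᵢ cᵢ, and φ(c) = λ(Σᵢ (ωᵢ^{−1}(c))^q)^{(1−q)/q} − c, one has 0 < c̲ ≤ c̄ and φ(c̲) ≥ 0. -/

import Mathlib

open scoped BigOperators

/-- The vector ℓq norm for a real exponent `q`. -/
noncomputable def lqNormR {n : ℕ} (q : ℝ) (x : Fin n → ℝ) : ℝ :=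
  (∑ i, |x i| ^ q) ^ (1 / q)

/-- Let `1 < q < ∞`, `v ∈ ℝⁿ` with `vᵢ > 0`, and `0 < λ < ‖v‖_{q̄}`
(`q̄ = q/(q−1)`).  With `ε = (‖v‖_{q̄} − λ)/‖v‖_{q̄}`,
`cᵢ = (vᵢ − vᵢε)/(vᵢε)^{q−1}`, `c̲ = minᵢ cᵢ` and `c̄ = maxᵢ cᵢ`, and
`φ(c) = λ(∑ᵢ (ωᵢ⁻¹(c))^q)^{(1−q)/q} − c`, one has `0 < c̲ ≤ c̄` and
`φ(c̲) ≥ 0`. -/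
theorem stmt8 {n : ℕ} [NeZero n] (q : ℝ) (hq : 1 < q)
    (v : Fin n → ℝ) (hv : ∀ i, 0 < v i) (lam : ℝ)
    (hlam : 0 < lam) (hlam' : lam < lqNormR (q / (q - 1)) v)
    (winv : Fin n → ℝ → ℝ)
    (hwinv : ∀ i, ∀ c : ℝ, 0 ≤ c →
      winv i c ∈ Set.Ioc (0 : ℝ) (v i) ∧
        winv i c + c * winv i c ^ (q - 1) = v i) :
    let eps : ℝ := (lqNormR (q / (q - 1)) v - lam) / lqNormR (q / (q - 1)) v
    let cc : Fin n → ℝ := fun i => (v i - v i * eps) / (v i * eps) ^ (q - 1)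
    let clow : ℝ := Finset.univ.inf' Finset.univ_nonempty cc
    let cbar : ℝ := Finset.univ.sup' Finset.univ_nonempty cc
    let phi : ℝ → ℝ := fun c => lam * (∑ i, winv i c ^ q) ^ ((1 - q) / q) - c
    0 < clow ∧ clow ≤ cbar ∧ 0 ≤ phi clow := by
  intro eps cc clow cbar phi
  set N := lqNormR (q / (q - 1)) v with hNdef
  have hN0 : 0 < N := lt_trans hlam hlam'
  have heps0 : 0 < eps := div_pos (by linarith) hN0
  have heps1 : eps < 1 := by
    rw [show eps = (N - lam) / N from rfl, div_lt_one hN0]; linarith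
  have hq1 : (0:ℝ) < q - 1 := by linarith
  have hq0 : (0:ℝ) < q := by linarith
  have hcc : ∀ i, 0 < cc i := by
    intro i
    apply div_pos
    · have := hv i; nlinarith
    · exact Real.rpow_pos_of_pos (mul_pos (hv i) heps0) _
  have hclow0 : 0 < clow := by
    rw [show clow = Finset.univ.inf' Finset.univ_nonempty cc from rfl,
      Finset.lt_inf'_iff]
    exact fun i _ => hcc i
  refine ⟨hclow0, ?_, ?_⟩
  · obtain ⟨i⟩ := Finset.univ_nonempty (α := Fin n)
    exact le_trans (Finset.inf'_le cc (Finset.mem_univ i))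
      (Finset.le_sup' cc (Finset.mem_univ i))
  -- main part
  have hclowle : ∀ i, clow ≤ cc i := fun i => Finset.inf'_le cc (Finset.mem_univ i)
  set x : Fin n → ℝ := fun i => winv i clow with hxdef
  have hx := fun i => hwinv i clow hclow0.le
  have hx0 : ∀ i, 0 < x i := fun i => (hx i).1.1
  have hxv : ∀ i, x i ≤ v i := fun i => (hx i).1.2
  have hxeq : ∀ i, x i + clow * x i ^ (q - 1) = v i := fun i => (hx i).2
  -- x i ≥ v i * eps
  have hxge : ∀ i, v i * eps ≤ x i := by
    intro i
    by_contra h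
    push_neg at h
    have hve : 0 < v i * eps := mul_pos (hv i) heps0
    have hne : (v i * eps) ^ (q - 1) ≠ 0 :=
      (Real.rpow_pos_of_pos hve _).ne'
    have heq2 : v i * eps + cc i * (v i * eps) ^ (q - 1) = v i := by
      show v i * eps + (v i - v i * eps) / (v i * eps) ^ (q - 1) * (v i * eps) ^ (q - 1) = v i
      rw [div_mul_cancel₀ _ hne]; ring
    have hlt : x i + clow * x i ^ (q - 1) < v i * eps + cc i * (v i * eps) ^ (q - 1) := by
      have h1 : x i ^ (q - 1) ≤ (v i * eps) ^ (q - 1) :=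
        Real.rpow_le_rpow (hx0 i).le h.le hq1.le
      have h2 : clow * x i ^ (q - 1) ≤ cc i * (v i * eps) ^ (q - 1) := by
        apply mul_le_mul (hclowle i) h1 (Real.rpow_nonneg (hx0 i).le _) (hcc i).le
      linarith
    rw [hxeq i, heq2] at hlt
    exact lt_irrefl _ hlt
  -- key quantities
  set qb : ℝ := q / (q - 1) with hqbdef
  have hqb0 : 0 < qb := div_pos hq0 hq1
  have hSpos : 0 < ∑ i, x i ^ q :=
    Finset.sum_pos (fun i _ => Real.rpow_pos_of_pos (hx0 i) _) Finset.univ_nonempty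
  -- (v i - x i)^qb = clow^qb * x i ^ q
  have hterm : ∀ i, (v i - x i) ^ qb = clow ^ qb * x i ^ q := by
    intro i
    have h1 : v i - x i = clow * x i ^ (q - 1) := by linarith [hxeq i]
    rw [h1, Real.mul_rpow hclow0.le (Real.rpow_nonneg (hx0 i).le _),
      ← Real.rpow_mul (hx0 i).le]
    congr 1
    rw [hqbdef]
    field_simp
  have hsum : clow ^ qb * ∑ i, x i ^ q ≤ (1 - eps) ^ qb * ∑ i, v i ^ qb := by
    rw [Finset.mul_sum, Finset.mul_sum]
    apply Finset.sum_le_sum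
    intro i _
    rw [← hterm i, ← Real.mul_rpow (by linarith) (hv i).le]
    exact Real.rpow_le_rpow (by linarith [hxv i]) (by nlinarith [hxge i, hv i]) hqb0.le
  have habs : ∑ i, |v i| ^ qb = ∑ i, v i ^ qb :=
    Finset.sum_congr rfl (fun i _ => by rw [abs_of_pos (hv i)])
  have hNpow : N ^ qb = ∑ i, v i ^ qb := by
    rw [hNdef]
    show ((∑ i, |v i| ^ qb) ^ (1 / qb)) ^ qb = _
    rw [← Real.rpow_mul (Finset.sum_nonneg fun i _ => Real.rpow_nonneg (abs_nonneg _) _),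
      one_div, inv_mul_cancel₀ hqb0.ne', Real.rpow_one, habs]
  have hlamN : lam = (1 - eps) * N := by
    rw [show eps = (N - lam) / N from rfl]
    field_simp
    ring
  have hkey : (clow * (∑ i, x i ^ q) ^ (1 / qb)) ^ qb ≤ lam ^ qb := by
    rw [Real.mul_rpow hclow0.le (Real.rpow_nonneg hSpos.le _),
      ← Real.rpow_mul hSpos.le, one_div, inv_mul_cancel₀ hqb0.ne', Real.rpow_one, hlamN,
      Real.mul_rpow (by linarith) hN0.le, hNpow]
    exact hsum
  have hkey2 : clow * (∑ i, x i ^ q) ^ (1 / qb) ≤ lam :=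
    (Real.rpow_le_rpow_iff
      (mul_nonneg hclow0.le (Real.rpow_nonneg hSpos.le _)) hlam.le hqb0).mp hkey
  show 0 ≤ lam * (∑ i, winv i clow ^ q) ^ ((1 - q) / q) - clow
  have hgoal : (∑ i, winv i clow ^ q) = ∑ i, x i ^ q := rfl
  have h1q : (1 - q) / q = -(1 / qb) := by
    rw [hqbdef]
    field_simp
    ring
  rw [hgoal, h1q, Real.rpow_neg hSpos.le]
  have hT : 0 < (∑ i, x i ^ q) ^ (1 / qb) := Real.rpow_pos_of_pos hSpos _
  have hfin := (le_div_iff₀ hT).mpr hkey2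
  rw [div_eq_mul_inv] at hfin
  linarith
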